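/- Let F be an r-sort species admitting a composition operator Η. Then for every r-tuple Ω of finite sets, F[Ω] = ⋃_{k ≥ 0} F_Η^(k)[Ω]; that is, every element of F[Ω] lies in F_Η^(k)[Ω] for some nonnegative integer k. -/

import Mathlib

open scoped Classical

noncomputable section

/-- Objects of `Set^r`: `r`-tuples of finite sets (realized as finite subsets of `ℕ`). -/
abbrev Obj (r : ℕ) := Fin r → Finset ℕ

variable {r : ℕ}

/-- The `r`-tuple of empty sets. -/
def oEmpty (r : ℕ) : Obj r := fun _ => ∅

/-- Componentwise union (the disjoint union `⨿` when the arguments are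
componentwise disjoint). -/
def oUnion (Ω₁ Ω₂ : Obj r) : Obj r := fun i => Ω₁ i ∪ Ω₂ i

/-- Componentwise intersection. -/
def oInter (Ω₁ Ω₂ : Obj r) : Obj r := fun i => Ω₁ i ∩ Ω₂ i

/-- Componentwise set difference. -/
def oDiff (Ω₁ Ω₂ : Obj r) : Obj r := fun i => Ω₁ i \ Ω₂ i

/-- Componentwise disjointness. -/
def oDisj (Ω₁ Ω₂ : Obj r) : Prop := ∀ i, Disjoint (Ω₁ i) (Ω₂ i)

/-- Componentwise containment. -/
def oSub (Ω₁ Ω₂ : Obj r) : Prop := ∀ i, Ω₁ i ⊆ Ω₂ i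

/-- A morphism of `Set^r`: an `r`-tuple of bijections between the components. -/
def Mor (Ω₁ Ω₂ : Obj r) : Type := ∀ i, {x // x ∈ Ω₁ i} ≃ {x // x ∈ Ω₂ i}

/-- The identity morphism. -/
def idMor (Ω : Obj r) : Mor Ω Ω := fun _ => Equiv.refl _

/-- Composition of morphisms. -/
def compMor {Ω₁ Ω₂ Ω₃ : Obj r} (f : Mor Ω₁ Ω₂) (g : Mor Ω₂ Ω₃) : Mor Ω₁ Ω₃ :=
  fun i => (f i).trans (g i)

/-- An `r`-sort species: a (covariant) functor from `Set^r` to the category of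
finite sets and bijections.  The value `F[Ω]` is the finite set `obj Ω`, and the
action on a morphism `f` is encoded by the function `map f : ℕ → ℕ` (only its
values on `obj Ω₁` are relevant). -/
structure Species (r : ℕ) where
  obj : Obj r → Finset ℕ
  map : ∀ {Ω₁ Ω₂ : Obj r}, Mor Ω₁ Ω₂ → ℕ → ℕ
  map_mem : ∀ {Ω₁ Ω₂ : Obj r} (f : Mor Ω₁ Ω₂), ∀ x ∈ obj Ω₁, map f x ∈ obj Ω₂
  map_id : ∀ (Ω : Obj r), ∀ x ∈ obj Ω, map (idMor Ω) x = x
  map_comp : ∀ {Ω₁ Ω₂ Ω₃ : Obj r} (f : Mor Ω₁ Ω₂) (g : Mor Ω₂ Ω₃), ∀ x ∈ obj Ω₁,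
    map (compMor f g) x = map g (map f x)

/-- The canonical identification of a disjoint union `s ∪ t` with the sum `s ⊕ t`. -/
def finsetSumEquiv {s t : Finset ℕ} (h : Disjoint s t) :
    {x // x ∈ s ∪ t} ≃ {x // x ∈ s} ⊕ {x // x ∈ t} :=
  (Equiv.subtypeEquivRight (fun x => by simp)).trans
    (Equiv.Set.union (s := (↑s : Set ℕ)) (t := (↑t : Set ℕ)) (by exact_mod_cast h))

/-- The disjoint union of two bijections, as a bijection between unions. -/
def finsetUnionEquiv {s t s' t' : Finset ℕ} (h : Disjoint s t) (h' : Disjoint s' t')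
    (f : {x // x ∈ s} ≃ {x // x ∈ s'}) (g : {x // x ∈ t} ≃ {x // x ∈ t'}) :
    {x // x ∈ s ∪ t} ≃ {x // x ∈ s' ∪ t'} :=
  (finsetSumEquiv h).trans ((f.sumCongr g).trans (finsetSumEquiv h').symm)

/-- The disjoint union `f ⨿ g` of two morphisms of `Set^r`. -/
def morUnion {Ω₁ Ω₂ Ω₁' Ω₂' : Obj r} (h : oDisj Ω₁ Ω₂) (h' : oDisj Ω₁' Ω₂')
    (f : Mor Ω₁ Ω₁') (g : Mor Ω₂ Ω₂') : Mor (oUnion Ω₁ Ω₂) (oUnion Ω₁' Ω₂') :=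
  fun i => finsetUnionEquiv (h i) (h' i) (f i) (g i)

/-- A composition operator `Η` for the species `F`: a natural transformation from
`F × F` (on pairs of componentwise disjoint objects) to `F ∘ ⨿` with injective
components, satisfying Axiom (D1). -/
structure CompOp {r : ℕ} (F : Species r) where
  η : Obj r → Obj r → ℕ × ℕ → ℕ
  mem_η : ∀ {Ω₁ Ω₂ : Obj r}, oDisj Ω₁ Ω₂ → ∀ x ∈ F.obj Ω₁, ∀ y ∈ F.obj Ω₂,
    η Ω₁ Ω₂ (x, y) ∈ F.obj (oUnion Ω₁ Ω₂)
  inj_η : ∀ {Ω₁ Ω₂ : Obj r}, oDisj Ω₁ Ω₂ →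
    Set.InjOn (η Ω₁ Ω₂) ((F.obj Ω₁ : Set ℕ) ×ˢ (F.obj Ω₂ : Set ℕ))
  natural : ∀ {Ω₁ Ω₂ Ω₁' Ω₂' : Obj r} (h : oDisj Ω₁ Ω₂) (h' : oDisj Ω₁' Ω₂')
    (f : Mor Ω₁ Ω₁') (g : Mor Ω₂ Ω₂'), ∀ x ∈ F.obj Ω₁, ∀ y ∈ F.obj Ω₂,
    F.map (morUnion h h' f g) (η Ω₁ Ω₂ (x, y)) = η Ω₁' Ω₂' (F.map f x, F.map g y)
  D1 : ∀ {Ω₁ Ω₂ Ω₃ Ω₄ : Obj r}, oDisj Ω₁ Ω₂ → oDisj Ω₃ Ω₄ →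
    oUnion Ω₁ Ω₂ = oUnion Ω₃ Ω₄ →
    η Ω₁ Ω₂ '' ((F.obj Ω₁ : Set ℕ) ×ˢ (F.obj Ω₂ : Set ℕ)) ∩
      η Ω₃ Ω₄ '' ((F.obj Ω₃ : Set ℕ) ×ˢ (F.obj Ω₄ : Set ℕ)) =
    η Ω₁ Ω₂ ''
      ((η (oInter Ω₁ Ω₃) (oInter Ω₁ Ω₄) ''
          ((F.obj (oInter Ω₁ Ω₃) : Set ℕ) ×ˢ (F.obj (oInter Ω₁ Ω₄) : Set ℕ))) ×ˢ
        (η (oInter Ω₂ Ω₃) (oInter Ω₂ Ω₄) ''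
          ((F.obj (oInter Ω₂ Ω₃) : Set ℕ) ×ˢ (F.obj (oInter Ω₂ Ω₄) : Set ℕ))))

/-- The set `F_Η[Ω]` of indecomposable elements of `F[Ω]`. -/
def indec (F : Species r) (E : CompOp F) (Ω : Obj r) : Set ℕ :=
  if Ω = oEmpty r then ∅
  else (F.obj Ω : Set ℕ) \
    ⋃ (p : Obj r × Obj r) (_ : oDisj p.1 p.2) (_ : p.1 ≠ oEmpty r) (_ : p.2 ≠ oEmpty r)
      (_ : oUnion p.1 p.2 = Ω),
      E.η p.1 p.2 '' ((F.obj p.1 : Set ℕ) ×ˢ (F.obj p.2 : Set ℕ))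

/-- The sets `F_Η^(k)[Ω]` of elements of `F[Ω]` consisting of exactly `k`
indecomposable components. -/
def indecK (F : Species r) (E : CompOp F) : ℕ → Obj r → Set ℕ
  | 0 => fun Ω => if Ω = oEmpty r then (F.obj (oEmpty r) : Set ℕ) else ∅
  | (k + 1) => fun Ω => ⋃ (Ω₁ : Obj r) (_ : oSub Ω₁ Ω),
      E.η Ω₁ (oDiff Ω Ω₁) '' ((indec F E Ω₁) ×ˢ (indecK F E k (oDiff Ω Ω₁)))

/-- `Ω_I`: the componentwise disjoint union of the family `Ωs` over the index set `s`. -/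
def bigU {ι : Type} [DecidableEq ι] (Ωs : ι → Obj r) (s : Finset ι) : Obj r :=
  fun i => s.biUnion (fun j => Ωs j i)

/-- `Brack F E Ωs leaf s B` says that `B` is an `Η`-bracketing of the sets
`leaf (Ωs i)`, `i ∈ s` (each occurring exactly once).  For `leaf Ω = F[Ω]` this is an
`Η`-bracketing of the `F[Ωs i]`; for `leaf = indec F E` it is an `Η`-bracketing of
the `F_Η[Ωs i]`. -/
inductive Brack (F : Species r) (E : CompOp F) {ι : Type} [DecidableEq ι]
    (Ωs : ι → Obj r) (leaf : Obj r → Set ℕ) : Finset ι → Set ℕ → Prop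
  | single (i : ι) : Brack F E Ωs leaf {i} (leaf (Ωs i))
  | node {s t : Finset ι} {B₁ B₂ : Set ℕ} :
      Disjoint s t → s.Nonempty → t.Nonempty →
      Brack F E Ωs leaf s B₁ → Brack F E Ωs leaf t B₂ →
      Brack F E Ωs leaf (s ∪ t) (E.η (bigU Ωs s) (bigU Ωs t) '' (B₁ ×ˢ B₂))

/-- A `Λ`-weight on `(F, Η)`: Axioms (W0), (W1), (W2). -/
structure Weight {r : ℕ} (F : Species r) (E : CompOp F) (Λ : Type) [CommRing Λ]
    [Algebra ℚ Λ] where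
  w : Obj r → ℕ → Λ
  W0 : ∀ x ∈ F.obj (oEmpty r), w (oEmpty r) x = 1
  W1 : ∀ {Ω Ω' : Obj r} (f : Mor Ω Ω'), ∀ x ∈ F.obj Ω, w Ω' (F.map f x) = w Ω x
  W2 : ∀ {Ω₁ Ω₂ : Obj r}, oDisj Ω₁ Ω₂ → ∀ x ∈ indec F E Ω₁, ∀ y ∈ F.obj Ω₂,
    w (oUnion Ω₁ Ω₂) (E.η Ω₁ Ω₂ (x, y)) = w Ω₁ x * w Ω₂ y

/-- The standard object `([n₁], …, [n_r])`, with `[n] = {1, …, n}`. -/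
def stdObj {r : ℕ} (n : Fin r → ℕ) : Obj r := fun i => Finset.Icc 1 (n i)

/-- The exponential generating function
`Σ_{n₁,…,n_r ≥ 0} Σ_{x ∈ S[([n₁],…,[n_r])]} w(x) z₁^{n₁} ⋯ z_r^{n_r}/(n₁! ⋯ n_r!)`
of a subfamily `S` of a species `F`, with respect to a weight `w`. -/
def GF {r : ℕ} {Λ : Type} [CommRing Λ] [Algebra ℚ Λ] (F : Species r)
    (S : Obj r → Set ℕ) (w : Obj r → ℕ → Λ) : MvPowerSeries (Fin r) Λ :=
  fun d => (algebraMap ℚ Λ (∏ i, (1 / (Nat.factorial (d i)) : ℚ))) *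
    ∑ x ∈ (F.obj (stdObj fun i => d i)).filter (fun x => x ∈ S (stdObj fun i => d i)),
      w (stdObj fun i => d i) x

/-- The exponential `exp f = Σ_{k ≥ 0} f^k / k!` of a multivariate formal power
series `f` with zero constant term (the coefficient of a given monomial only
receives contributions from `k` at most the total degree). -/
def mvExp {σ Λ : Type} [CommRing Λ] [Algebra ℚ Λ] (f : MvPowerSeries σ Λ) :
    MvPowerSeries σ Λ :=
  fun d => ∑ k ∈ Finset.range ((d.sum fun _ m => m) + 1),
    algebraMap ℚ Λ ((1 : ℚ) / (Nat.factorial k)) * MvPowerSeries.coeff d (f ^ k)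

/-- The logarithm `log f = Σ_{k ≥ 1} (-1)^{k+1} (f-1)^k / k` of a multivariate
formal power series `f` with constant term `1`. -/
def mvLog {σ Λ : Type} [CommRing Λ] [Algebra ℚ Λ] (f : MvPowerSeries σ Λ) :
    MvPowerSeries σ Λ :=
  fun d => ∑ k ∈ Finset.Icc 1 (d.sum fun _ m => m),
    algebraMap ℚ Λ ((-1 : ℚ) ^ (k + 1) / k) * MvPowerSeries.coeff d ((f - 1) ^ k)

/-- The refined generating function `G̃F_F(z₁,…,z_r,y)`, a power series in
`z₁, …, z_r` with coefficients that are polynomials in `y` (recorded via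
`Polynomial Λ`, the variable `y` being `Polynomial.X`):
`Σ_{n₁,…,n_r ≥ 0} Σ_k Σ_{x ∈ F_Η^(k)[([n₁],…,[n_r])]} y^k w(x) z₁^{n₁}⋯z_r^{n_r}/(n₁!⋯n_r!)`
(for fixed `n₁, …, n_r` only the `k ≤ n₁ + ⋯ + n_r` contribute, since
`F_Η^(k)[Ω] = ∅ for k > ‖Ω‖`). -/
def tGF {r : ℕ} {Λ : Type} [CommRing Λ] [Algebra ℚ Λ] (F : Species r) (E : CompOp F)
    (w : Obj r → ℕ → Λ) : MvPowerSeries (Fin r) (Polynomial Λ) :=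
  fun d => Polynomial.C (algebraMap ℚ Λ (∏ i, (1 / (Nat.factorial (d i)) : ℚ))) *
    ∑ k ∈ Finset.range ((∑ i, d i) + 1), Polynomial.X ^ k *
      Polynomial.C (∑ x ∈ (F.obj (stdObj fun i => d i)).filter
          (fun x => x ∈ indecK F E k (stdObj fun i => d i)),
        w (stdObj fun i => d i) x)

/-- The species `E(F_Η)` of sets of `F_Η`-structures:  `E(F_Η)[Ω]` consists of all
finite sets `{(x₁,Ω₁),…,(x_k,Ω_k)}` with `x_i ∈ F_Η[Ω_i]`, the `Ω_i` nonempty and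
pairwise componentwise disjoint, and `Ω₁ ⨿ ⋯ ⨿ Ω_k = Ω`. -/
def ESet {r : ℕ} (F : Species r) (E : CompOp F) (Ω : Obj r) :
    Set (Finset (ℕ × Obj r)) :=
  { s | (∀ p ∈ s, p.1 ∈ indec F E p.2 ∧ p.2 ≠ oEmpty r) ∧
        (∀ p ∈ s, ∀ q ∈ s, p ≠ q → oDisj p.2 q.2) ∧
        (∀ i, Ω i = s.biUnion (fun p => p.2 i)) }

/-- The bijection between a finite set and its image under a map injective on it. -/
def imageEquiv {u : Finset ℕ} (g : ℕ → ℕ) (hg : Set.InjOn g (u : Set ℕ)) :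
    {x // x ∈ u} ≃ {x // x ∈ u.image g} :=
  Equiv.ofBijective (fun x => ⟨g x, Finset.mem_image_of_mem g x.2⟩) (by
    constructor
    · rintro ⟨a, ha⟩ ⟨b, hb⟩ hab
      exact Subtype.ext (hg (by exact_mod_cast ha) (by exact_mod_cast hb)
        (congrArg Subtype.val hab))
    · rintro ⟨y, hy⟩
      rcases Finset.mem_image.mp hy with ⟨a, ha, rfl⟩
      exact ⟨⟨a, ha⟩, rfl⟩)

/-- The underlying function `ℕ → ℕ` of the `i`-th component of a morphism. -/
def apMor {Ω Ω' : Obj r} (f : Mor Ω Ω') (i : Fin r) (a : ℕ) : ℕ :=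
  if h : a ∈ Ω i then ((f i) ⟨a, h⟩ : ℕ) else a

/-- The componentwise image of a subobject `O ⊆ Ω` under a morphism `f : Ω → Ω'`. -/
def oImage {Ω Ω' : Obj r} (f : Mor Ω Ω') (O : Obj r) : Obj r :=
  fun i => (O i).image (apMor f i)

/-- The restriction of a morphism `f : Ω → Ω'` to a subobject `O ⊆ Ω`. -/
def restrictMor {Ω Ω' : Obj r} (f : Mor Ω Ω') {O : Obj r} (hO : oSub O Ω) :
    Mor O (oImage f O) :=
  fun i => imageEquiv (apMor f i) (by
    intro a ha b hb hab
    have ha' : a ∈ Ω i := hO i (by exact_mod_cast ha)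
    have hb' : b ∈ Ω i := hO i (by exact_mod_cast hb)
    have h1 : ((f i) ⟨a, ha'⟩ : ℕ) = ((f i) ⟨b, hb'⟩ : ℕ) := by
      simpa [apMor, dif_pos ha', dif_pos hb'] using hab
    have h2 := (f i).injective (Subtype.ext h1)
    exact congrArg Subtype.val h2)

/-- The induced action of a morphism `f : Ω → Ω'` on `E(F_Η)[Ω]`. -/
def Emap {r : ℕ} (F : Species r) {Ω Ω' : Obj r} (f : Mor Ω Ω')
    (s : Finset (ℕ × Obj r)) : Finset (ℕ × Obj r) :=
  s.image (fun p =>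
    if h : oSub p.2 Ω then (F.map (restrictMor f h) p.1, oImage f p.2) else p)

/-! ### Auxiliary lemmas for Theorem 14 -/

lemma oDisj_empty_left (Ω : Obj r) : oDisj (oEmpty r) Ω := fun i => by
  simp [oEmpty]

lemma oDisj_empty_right (Ω : Obj r) : oDisj Ω (oEmpty r) := fun i => by
  simp [oEmpty]

lemma oDisj.symm' {Ω₁ Ω₂ : Obj r} (h : oDisj Ω₁ Ω₂) : oDisj Ω₂ Ω₁ :=
  fun i => (h i).symm

lemma oUnion_empty_right (Ω : Obj r) : oUnion Ω (oEmpty r) = Ω :=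
  funext fun i => Finset.union_empty _

lemma oUnion_empty_left (Ω : Obj r) : oUnion (oEmpty r) Ω = Ω :=
  funext fun i => Finset.empty_union _

lemma oInter_self (Ω : Obj r) : oInter Ω Ω = Ω :=
  funext fun i => Finset.inter_self _

lemma oInter_of_disj {A B : Obj r} (h : oDisj A B) : oInter A B = oEmpty r :=
  funext fun i => Finset.disjoint_iff_inter_eq_empty.mp (h i)

lemma oInter_sub {A B : Obj r} (h : oSub A B) : oInter B A = A :=
  funext fun i => Finset.inter_eq_right.mpr (h i)

lemma oInter_empty_left (Ω : Obj r) : oInter (oEmpty r) Ω = oEmpty r :=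
  funext fun i => Finset.empty_inter _

lemma oDiff_self (Ω : Obj r) : oDiff Ω Ω = oEmpty r :=
  funext fun i => Finset.sdiff_self _

lemma oDiff_union {Ω₁ Ω₂ : Obj r} (h : oDisj Ω₁ Ω₂) :
    oDiff (oUnion Ω₁ Ω₂) Ω₁ = Ω₂ :=
  funext fun i => Finset.union_sdiff_cancel_left (h i)

lemma oSub_union_left {Ω₁ Ω₂ : Obj r} : oSub Ω₁ (oUnion Ω₁ Ω₂) :=
  fun i => Finset.subset_union_left

lemma oSub_union_right {Ω₁ Ω₂ : Obj r} : oSub Ω₂ (oUnion Ω₁ Ω₂) :=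
  fun i => Finset.subset_union_right

/-- The total size of an object. -/
def osize (Ω : Obj r) : ℕ := ∑ i, (Ω i).card

lemma osize_union {Ω₁ Ω₂ : Obj r} (h : oDisj Ω₁ Ω₂) :
    osize (oUnion Ω₁ Ω₂) = osize Ω₁ + osize Ω₂ := by
  simp only [osize, oUnion]
  rw [← Finset.sum_add_distrib]
  exact Finset.sum_congr rfl fun i _ => Finset.card_union_of_disjoint (h i)

lemma osize_pos {Ω : Obj r} (h : Ω ≠ oEmpty r) : 0 < osize Ω := by
  rcases Nat.eq_zero_or_pos (osize Ω) with h0 | h0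
  · exfalso
    apply h
    funext i
    have := (Finset.sum_eq_zero_iff).mp h0 i (Finset.mem_univ i)
    simpa [oEmpty, Finset.card_eq_zero] using this
  · exact h0

lemma prod_cancel {F₁ F₂ A B : Set ℕ} (h : F₁ ×ˢ F₂ = A ×ˢ B)
    (h1 : F₁.Nonempty) (h2 : F₂.Nonempty) (hA : A ⊆ F₁) (hB : B ⊆ F₂) :
    A = F₁ ∧ B = F₂ := by
  constructor
  · refine Set.Subset.antisymm hA (fun a ha => ?_)
    obtain ⟨b, hb⟩ := h2
    have : (a, b) ∈ A ×ˢ B := h ▸ Set.mk_mem_prod ha hb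
    exact this.1
  · refine Set.Subset.antisymm hB (fun b hb => ?_)
    obtain ⟨a, ha⟩ := h1
    have : (a, b) ∈ A ×ˢ B := h ▸ Set.mk_mem_prod ha hb
    exact this.2

/-- The key identity obtained from Axiom (D1) applied to a decomposition and itself. -/
lemma key_identity (F : Species r) (E : CompOp F) {Ω₁ Ω₂ : Obj r} (h : oDisj Ω₁ Ω₂) :
    E.η Ω₁ Ω₂ '' ((F.obj Ω₁ : Set ℕ) ×ˢ (F.obj Ω₂ : Set ℕ)) =
    E.η Ω₁ Ω₂ ''
      ((E.η Ω₁ (oEmpty r) '' ((F.obj Ω₁ : Set ℕ) ×ˢ (F.obj (oEmpty r) : Set ℕ))) ×ˢ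
        (E.η (oEmpty r) Ω₂ '' ((F.obj (oEmpty r) : Set ℕ) ×ˢ (F.obj Ω₂ : Set ℕ)))) := by
  have := E.D1 h h rfl
  rwa [Set.inter_self, oInter_self, oInter_self, oInter_of_disj h,
    oInter_of_disj h.symm'] at this

lemma eta_image_subset (F : Species r) (E : CompOp F) {Ω₁ Ω₂ : Obj r}
    (h : oDisj Ω₁ Ω₂) :
    E.η Ω₁ Ω₂ '' ((F.obj Ω₁ : Set ℕ) ×ˢ (F.obj Ω₂ : Set ℕ)) ⊆
      (F.obj (oUnion Ω₁ Ω₂) : Set ℕ) := by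
  rintro w ⟨⟨x, y⟩, ⟨hx, hy⟩, rfl⟩
  exact E.mem_η h x hx y hy

/-- Cancellation of the injective map `η` from the key identity. -/
lemma key_cancel (F : Species r) (E : CompOp F) {Ω₁ Ω₂ : Obj r} (h : oDisj Ω₁ Ω₂) :
    (F.obj Ω₁ : Set ℕ) ×ˢ (F.obj Ω₂ : Set ℕ) =
      (E.η Ω₁ (oEmpty r) '' ((F.obj Ω₁ : Set ℕ) ×ˢ (F.obj (oEmpty r) : Set ℕ))) ×ˢ
        (E.η (oEmpty r) Ω₂ '' ((F.obj (oEmpty r) : Set ℕ) ×ˢ (F.obj Ω₂ : Set ℕ))) := by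
  have hA : E.η Ω₁ (oEmpty r) '' ((F.obj Ω₁ : Set ℕ) ×ˢ (F.obj (oEmpty r) : Set ℕ)) ⊆
      (F.obj Ω₁ : Set ℕ) := by
    have := eta_image_subset F E (oDisj_empty_right Ω₁)
    rwa [oUnion_empty_right] at this
  have hB : E.η (oEmpty r) Ω₂ '' ((F.obj (oEmpty r) : Set ℕ) ×ˢ (F.obj Ω₂ : Set ℕ)) ⊆
      (F.obj Ω₂ : Set ℕ) := by
    have := eta_image_subset F E (oDisj_empty_left Ω₂)
    rwa [oUnion_empty_left] at this
  exact ((E.inj_η h).image_eq_image_iff (le_refl _)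
    (Set.prod_mono hA hB)).mp (key_identity F E h)

/-- `F[(∅,…,∅)]` is nonempty as soon as `F` is not the empty species. -/
lemma Fempty_nonempty (F : Species r) (E : CompOp F)
    (hF : ∃ Ω : Obj r, (F.obj Ω).Nonempty) : (F.obj (oEmpty r)).Nonempty := by
  obtain ⟨Ω₀, x₀, hx₀⟩ := hF
  set N : ℕ := (Finset.univ.sup fun i => (Ω₀ i).sup id) + 1 with hN
  set Ω₀' : Obj r := fun i => (Ω₀ i).image (· + N) with hΩ₀'
  have hdisj : oDisj Ω₀ Ω₀' := by
    intro i
    rw [Finset.disjoint_left]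
    intro a ha ha'
    obtain ⟨c, _, hc⟩ := Finset.mem_image.mp ha'
    have h1 : a ≤ (Ω₀ i).sup id := Finset.le_sup (f := id) ha
    have h2 : (Ω₀ i).sup id ≤ Finset.univ.sup fun i => (Ω₀ i).sup id :=
      Finset.le_sup (f := fun i => (Ω₀ i).sup id) (Finset.mem_univ i)
    omega
  have finj : ∀ i : Fin r, Set.InjOn (· + N) ((Ω₀ i : Set ℕ)) := by
    intro i a _ b _ hab
    simpa using hab
  let f : Mor Ω₀ Ω₀' := fun i => imageEquiv (· + N) (finj i)
  have hx₀' : F.map f x₀ ∈ F.obj Ω₀' := F.map_mem f x₀ hx₀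
  have hkey := key_identity F E hdisj
  have hmem : E.η Ω₀ Ω₀' (x₀, F.map f x₀) ∈
      E.η Ω₀ Ω₀' '' ((F.obj Ω₀ : Set ℕ) ×ˢ (F.obj Ω₀' : Set ℕ)) :=
    Set.mem_image_of_mem _ (Set.mk_mem_prod (by exact_mod_cast hx₀) (by exact_mod_cast hx₀'))
  rw [hkey] at hmem
  obtain ⟨⟨p, q⟩, ⟨hp, _⟩, _⟩ := hmem
  obtain ⟨⟨a, e⟩, ⟨_, he⟩, _⟩ := hp
  exact ⟨e, by exact_mod_cast he⟩

/-- Left unit: `η(F[∅] × F[Ω]) = F[Ω]`. -/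
lemma unit_left (F : Species r) (E : CompOp F) (hFe : (F.obj (oEmpty r)).Nonempty)
    {Ω : Obj r} (hΩ : (F.obj Ω).Nonempty) :
    E.η (oEmpty r) Ω '' ((F.obj (oEmpty r) : Set ℕ) ×ˢ (F.obj Ω : Set ℕ)) =
      (F.obj Ω : Set ℕ) := by
  have h := key_cancel F E (oDisj_empty_left Ω)
  have hA : E.η (oEmpty r) (oEmpty r) ''
      ((F.obj (oEmpty r) : Set ℕ) ×ˢ (F.obj (oEmpty r) : Set ℕ)) ⊆
      (F.obj (oEmpty r) : Set ℕ) := by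
    have := eta_image_subset F E (oDisj_empty_left (oEmpty r))
    rwa [oUnion_empty_left] at this
  have hB : E.η (oEmpty r) Ω '' ((F.obj (oEmpty r) : Set ℕ) ×ˢ (F.obj Ω : Set ℕ)) ⊆
      (F.obj Ω : Set ℕ) := by
    have := eta_image_subset F E (oDisj_empty_left Ω)
    rwa [oUnion_empty_left] at this
  exact (prod_cancel h (Finset.coe_nonempty.mpr hFe) (Finset.coe_nonempty.mpr hΩ) hA hB).2

/-- Right unit: `η(F[Ω] × F[∅]) = F[Ω]`. -/
lemma unit_right (F : Species r) (E : CompOp F) (hFe : (F.obj (oEmpty r)).Nonempty)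
    {Ω : Obj r} (hΩ : (F.obj Ω).Nonempty) :
    E.η Ω (oEmpty r) '' ((F.obj Ω : Set ℕ) ×ˢ (F.obj (oEmpty r) : Set ℕ)) =
      (F.obj Ω : Set ℕ) := by
  have h := key_cancel F E (oDisj_empty_right Ω)
  have hA : E.η Ω (oEmpty r) '' ((F.obj Ω : Set ℕ) ×ˢ (F.obj (oEmpty r) : Set ℕ)) ⊆
      (F.obj Ω : Set ℕ) := by
    have := eta_image_subset F E (oDisj_empty_right Ω)
    rwa [oUnion_empty_right] at this
  have hB : E.η (oEmpty r) (oEmpty r) ''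
      ((F.obj (oEmpty r) : Set ℕ) ×ˢ (F.obj (oEmpty r) : Set ℕ)) ⊆
      (F.obj (oEmpty r) : Set ℕ) := by
    have := eta_image_subset F E (oDisj_empty_left (oEmpty r))
    rwa [oUnion_empty_left] at this
  exact (prod_cancel h (Finset.coe_nonempty.mpr hΩ) (Finset.coe_nonempty.mpr hFe) hA hB).1

lemma indec_subset (F : Species r) (E : CompOp F) (Ω : Obj r) :
    indec F E Ω ⊆ (F.obj Ω : Set ℕ) := by
  unfold indec
  split
  · exact Set.empty_subset _
  · exact Set.diff_subset

lemma indecK_subset (F : Species r) (E : CompOp F) :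
    ∀ (k : ℕ) (Ω : Obj r), indecK F E k Ω ⊆ (F.obj Ω : Set ℕ) := by
  intro k
  induction k with
  | zero =>
    intro Ω
    simp only [indecK]
    split
    · next h => subst h; exact le_refl _
    · exact Set.empty_subset _
  | succ k IH =>
    intro Ω x hx
    simp only [indecK, Set.mem_iUnion] at hx
    obtain ⟨Ω₁, hsub, ⟨⟨y, z⟩, ⟨hy, hz⟩, rfl⟩⟩ := hx
    have hdisj : oDisj Ω₁ (oDiff Ω Ω₁) := fun i => Finset.disjoint_sdiff
    have := E.mem_η hdisj y (indec_subset F E Ω₁ hy) z (IH _ hz)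
    have heq : oUnion Ω₁ (oDiff Ω Ω₁) = Ω :=
      funext fun i => Finset.union_sdiff_of_subset (hsub i)
    rwa [heq] at this

/-- Main induction: every element of `F[Ω]` lies in some `F_Η^(k)[Ω]`. -/
lemma exists_indecK (F : Species r) (E : CompOp F)
    (hFe : (F.obj (oEmpty r)).Nonempty) :
    ∀ (n : ℕ) (Ω : Obj r), osize Ω ≤ n → ∀ x ∈ F.obj Ω, ∃ k, x ∈ indecK F E k Ω := by
  intro n
  induction n with
  | zero =>
    intro Ω hΩ x hx
    have hΩe : Ω = oEmpty r := by
      by_contra h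
      have := osize_pos h
      omega
    refine ⟨0, ?_⟩
    simp only [indecK, if_pos hΩe]
    subst hΩe
    exact_mod_cast hx
  | succ n IH =>
    intro Ω hΩ x hx
    by_cases hΩe : Ω = oEmpty r
    · refine ⟨0, ?_⟩
      simp only [indecK, if_pos hΩe]
      subst hΩe
      exact_mod_cast hx
    -- decomposability predicate
    by_cases hdec : ∃ (Ω₁ Ω₂ : Obj r), oDisj Ω₁ Ω₂ ∧ Ω₁ ≠ oEmpty r ∧ Ω₂ ≠ oEmpty r ∧
        oUnion Ω₁ Ω₂ = Ω ∧
        x ∈ E.η Ω₁ Ω₂ '' ((F.obj Ω₁ : Set ℕ) ×ˢ (F.obj Ω₂ : Set ℕ))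
    · -- x is decomposable: pick a decomposition with minimal left part
      set P : ℕ → Prop := fun m => ∃ (Ω₁ Ω₂ : Obj r), osize Ω₁ = m ∧ oDisj Ω₁ Ω₂ ∧
        Ω₁ ≠ oEmpty r ∧ Ω₂ ≠ oEmpty r ∧ oUnion Ω₁ Ω₂ = Ω ∧
        x ∈ E.η Ω₁ Ω₂ '' ((F.obj Ω₁ : Set ℕ) ×ˢ (F.obj Ω₂ : Set ℕ)) with hP
      have hex : ∃ m, P m := by
        obtain ⟨Ω₁, Ω₂, h1, h2, h3, h4, h5⟩ := hdec
        exact ⟨osize Ω₁, Ω₁, Ω₂, rfl, h1, h2, h3, h4, h5⟩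
      obtain ⟨Ω₁, Ω₂, hsize, hdisj, hne₁, hne₂, hU, hximg⟩ := Nat.find_spec hex
      obtain ⟨⟨y, z⟩, ⟨hy, hz⟩, hxe⟩ := hximg
      have hy' : y ∈ F.obj Ω₁ := by exact_mod_cast hy
      have hz' : z ∈ F.obj Ω₂ := by exact_mod_cast hz
      -- y is indecomposable
      have hyind : y ∈ indec F E Ω₁ := by
        unfold indec
        rw [if_neg hne₁]
        refine ⟨hy, ?_⟩
        intro hmem
        simp only [Set.mem_iUnion] at hmem
        obtain ⟨⟨A, B⟩, hABdisj, hAne, hBne, hABU, hyAB⟩ := hmem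
        -- build a smaller decomposition of x via (D1)
        have hA₁ : oSub A Ω₁ := by rw [← hABU]; exact oSub_union_left
        have hB₁ : oSub B Ω₁ := by rw [← hABU]; exact oSub_union_right
        have hdisj' : oDisj A (oUnion B Ω₂) := by
          intro i
          simp only [oUnion]
          exact Finset.disjoint_union_right.mpr
            ⟨hABdisj i, Finset.disjoint_of_subset_left (hA₁ i) (hdisj i)⟩
        have hUeq : oUnion Ω₁ Ω₂ = oUnion A (oUnion B Ω₂) := by
          funext i
          have : Ω₁ i = A i ∪ B i := (congrFun hABU i).symm
          simp only [oUnion, this, Finset.union_assoc]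
        have hD1 := E.D1 hdisj hdisj' hUeq
        have e1 : oInter Ω₁ A = A := oInter_sub hA₁
        have e2 : oInter Ω₁ (oUnion B Ω₂) = B := by
          funext i
          simp only [oInter, oUnion, Finset.inter_union_distrib_left]
          rw [Finset.inter_eq_right.mpr (hB₁ i),
            Finset.disjoint_iff_inter_eq_empty.mp (hdisj i), Finset.union_empty]
        have e3 : oInter Ω₂ A = oEmpty r := by
          funext i
          exact Finset.disjoint_iff_inter_eq_empty.mp
            (Finset.disjoint_of_subset_right (hA₁ i) (hdisj i).symm)
        have e4 : oInter Ω₂ (oUnion B Ω₂) = Ω₂ := by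
          funext i
          simp only [oInter, oUnion, Finset.inter_union_distrib_left]
          rw [Finset.inter_self,
            Finset.disjoint_iff_inter_eq_empty.mp
              (Finset.disjoint_of_subset_right (hB₁ i) (hdisj i).symm),
            Finset.empty_union]
        rw [e1, e2, e3, e4] at hD1
        have hzmem : z ∈ E.η (oEmpty r) Ω₂ ''
            ((F.obj (oEmpty r) : Set ℕ) ×ˢ (F.obj Ω₂ : Set ℕ)) := by
          rw [unit_left F E hFe ⟨z, hz'⟩]
          exact hz
        have hxRHS : x ∈ E.η Ω₁ Ω₂ ''
            ((E.η A B '' ((F.obj A : Set ℕ) ×ˢ (F.obj B : Set ℕ))) ×ˢ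
              (E.η (oEmpty r) Ω₂ ''
                ((F.obj (oEmpty r) : Set ℕ) ×ˢ (F.obj Ω₂ : Set ℕ)))) := by
          rw [← hxe]
          exact Set.mem_image_of_mem _ (Set.mk_mem_prod hyAB hzmem)
        rw [← hD1] at hxRHS
        have hxA : x ∈ E.η A (oUnion B Ω₂) ''
            ((F.obj A : Set ℕ) ×ˢ (F.obj (oUnion B Ω₂) : Set ℕ)) := hxRHS.2
        -- contradiction with minimality
        have hBpos : 0 < osize B := osize_pos hBne
        have hsplit : osize Ω₁ = osize A + osize B := by
          rw [← hABU]; exact osize_union hABdisj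
        have hlt : osize A < Nat.find hex := by omega
        exact Nat.find_min hex hlt ⟨A, oUnion B Ω₂, rfl, hdisj', hAne,
          (fun h => hBne (by
            funext i
            have := congrFun h i
            simp only [oUnion, oEmpty] at this ⊢
            exact Finset.union_eq_empty.mp this |>.1)),
          hUeq ▸ hU, hxA⟩
      -- apply the induction hypothesis to z
      have hΩ₂size : osize Ω₂ ≤ n := by
        have h1 : osize Ω = osize Ω₁ + osize Ω₂ := by rw [← hU]; exact osize_union hdisj
        have h2 : 0 < osize Ω₁ := osize_pos hne₁
        omega
      obtain ⟨k, hk⟩ := IH Ω₂ hΩ₂size z hz'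
      refine ⟨k + 1, ?_⟩
      simp only [indecK, Set.mem_iUnion]
      refine ⟨Ω₁, by rw [← hU]; exact oSub_union_left, ?_⟩
      have hdiff : oDiff Ω Ω₁ = Ω₂ := by rw [← hU]; exact oDiff_union hdisj
      rw [hdiff]
      exact ⟨(y, z), ⟨hyind, hk⟩, hxe⟩
    · -- x is indecomposable
      push_neg at hdec
      have hximg : x ∈ E.η Ω (oEmpty r) ''
          ((F.obj Ω : Set ℕ) ×ˢ (F.obj (oEmpty r) : Set ℕ)) := by
        rw [unit_right F E hFe ⟨x, hx⟩]
        exact_mod_cast hx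
      obtain ⟨⟨x', e⟩, ⟨hx', he⟩, hxe⟩ := hximg
      have hx'F : x' ∈ F.obj Ω := by exact_mod_cast hx'
      have hx'ind : x' ∈ indec F E Ω := by
        unfold indec
        rw [if_neg hΩe]
        refine ⟨hx', ?_⟩
        intro hmem
        simp only [Set.mem_iUnion] at hmem
        obtain ⟨⟨A, B⟩, hABdisj, hAne, hBne, hABU, hx'AB⟩ := hmem
        have hA₁ : oSub A Ω := by rw [← hABU]; exact oSub_union_left
        have hB₁ : oSub B Ω := by rw [← hABU]; exact oSub_union_right
        have hUeq : oUnion Ω (oEmpty r) = oUnion A B := by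
          rw [oUnion_empty_right, ← hABU]
        have hD1 := E.D1 (oDisj_empty_right Ω) hABdisj hUeq
        have e1 : oInter Ω A = A := oInter_sub hA₁
        have e2 : oInter Ω B = B := oInter_sub hB₁
        have e3 : oInter (oEmpty r) A = oEmpty r := oInter_empty_left A
        have e4 : oInter (oEmpty r) B = oEmpty r := oInter_empty_left B
        rw [e1, e2, e3, e4] at hD1
        have hemem : e ∈ E.η (oEmpty r) (oEmpty r) ''
            ((F.obj (oEmpty r) : Set ℕ) ×ˢ (F.obj (oEmpty r) : Set ℕ)) := by
          rw [unit_left F E hFe hFe]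
          exact he
        have hxRHS : x ∈ E.η Ω (oEmpty r) ''
            ((E.η A B '' ((F.obj A : Set ℕ) ×ˢ (F.obj B : Set ℕ))) ×ˢ
              (E.η (oEmpty r) (oEmpty r) ''
                ((F.obj (oEmpty r) : Set ℕ) ×ˢ (F.obj (oEmpty r) : Set ℕ)))) := by
          rw [← hxe]
          exact Set.mem_image_of_mem _ (Set.mk_mem_prod hx'AB hemem)
        rw [← hD1] at hxRHS
        exact hdec A B hABdisj hAne hBne hABU hxRHS.2
      refine ⟨1, ?_⟩
      simp only [indecK, Set.mem_iUnion]
      refine ⟨Ω, fun i => le_refl _, ?_⟩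
      rw [oDiff_self]
      simp only [indecK, if_pos rfl]
      exact ⟨(x', e), ⟨hx'ind, by exact_mod_cast he⟩, hxe⟩

/-- `F[Ω] = ⋃_{k ≥ 0} F_Η^(k)[Ω]` for every object `Ω`. -/
theorem stmt14 {r : ℕ} (hr : 0 < r) (F : Species r) (E : CompOp F)
    (hF : ∃ Ω : Obj r, (F.obj Ω).Nonempty)
    (Ω : Obj r) :
    (F.obj Ω : Set ℕ) = ⋃ k : ℕ, indecK F E k Ω := by
  have hFe : (F.obj (oEmpty r)).Nonempty := Fempty_nonempty F E hF
  apply Set.Subset.antisymm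
  · intro x hx
    obtain ⟨k, hk⟩ := exists_indecK F E hFe (osize Ω) Ω (le_refl _) x (by exact_mod_cast hx)
    exact Set.mem_iUnion.mpr ⟨k, hk⟩
  · exact Set.iUnion_subset fun k => indecK_subset F E k Ω

end
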